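/- Let L be an n×n real symmetric positive semidefinite matrix with eigenvalues λ₁,…,λₙ, and K = L(L+I)⁻¹. Then the variance of the cardinality of a subset Y drawn from the L-ensemble satisfies Var[|Y|] = Σᵢ λᵢ/(λᵢ+1)²; explicitly, Σ_{Y ⊆ {1,…,n}} |Y|² · det(L_Y)/det(L+I) − (trace K)² = Σᵢ λᵢ/(λᵢ+1)². -/

import Mathlib

open Matrix BigOperators

/-- The principal submatrix of `M` indexed by the subset `S`. -/
def principalSubmatrix {n : ℕ} (M : Matrix (Fin n) (Fin n) ℝ) (S : Finset (Fin n)) :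
    Matrix {i // i ∈ S} {i // i ∈ S} ℝ :=
  M.submatrix (fun i => (i : Fin n)) (fun i => (i : Fin n))


lemma det_piecewise_one {R : Type*} [CommRing R] {n : ℕ} (M : Matrix (Fin n) (Fin n) R)
    (S : Finset (Fin n)) :
    Matrix.det (S.piecewise M (1 : Matrix (Fin n) (Fin n) R))
      = (M.submatrix (Subtype.val : {i // i ∈ S} → Fin n) Subtype.val).det := by
  classical
  let e : {i // i ∈ S} ⊕ {i // ¬ i ∈ S} ≃ Fin n := Equiv.sumCompl (· ∈ S)
  refine (Matrix.det_submatrix_equiv_self e _).symm.trans ?_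
  have h : Matrix.submatrix (S.piecewise M (1 : Matrix (Fin n) (Fin n) R)) e e =
      Matrix.fromBlocks (M.submatrix Subtype.val Subtype.val)
        ((M.submatrix Subtype.val Subtype.val : Matrix {i // i ∈ S} {i // ¬ i ∈ S} R))
        0 (1 : Matrix {i // ¬ i ∈ S} {i // ¬ i ∈ S} R) := by
    ext i j
    cases i with
    | inl i =>
      cases j with
      | inl j =>
        simp [e, Matrix.submatrix_apply, Finset.piecewise_eq_of_mem _ _ _ i.2, Matrix.submatrix, Finset.piecewise]
      | inr j =>
        simp [e, Matrix.submatrix_apply, Finset.piecewise_eq_of_mem _ _ _ i.2, Matrix.submatrix, Finset.piecewise]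
    | inr i =>
      cases j with
      | inl j =>
        have hij : (i : Fin n) ≠ (j : Fin n) := fun hij => i.2 (hij ▸ j.2)
        simp [e, Matrix.submatrix_apply, Finset.piecewise_eq_of_notMem _ _ _ i.2, Matrix.submatrix, Finset.piecewise,
          Matrix.one_apply, hij, i.2, Equiv.sumCompl_apply_inr]
      | inr j =>
        simp [e, Matrix.submatrix_apply, Finset.piecewise_eq_of_notMem _ _ _ i.2, Matrix.submatrix, Finset.piecewise,
          Matrix.one_apply, Subtype.ext_iff, i.2, Equiv.sumCompl_apply_inr]
        congr
  rw [h, Matrix.det_fromBlocks_zero₂₁, Matrix.det_one, mul_one]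

lemma det_one_add_smul_eq_sum {R : Type*} [CommRing R] {n : ℕ} (x : R)
    (M : Matrix (Fin n) (Fin n) R) :
    (1 + x • M).det = ∑ S : Finset (Fin n),
      x ^ S.card * (M.submatrix (Subtype.val : {i // i ∈ S} → Fin n) Subtype.val).det := by
  classical
  have h0 : (1 + x • M).det
      = (Matrix.detRowAlternating : (Fin n → R) [⋀^Fin n]→ₗ[R] R).toMultilinearMap
          ((fun i => x • M i) + (fun i => (1 : Matrix (Fin n) (Fin n) R) i)) := by
    congr 1
    ext i j
    simp [Matrix.add_apply, add_comm]
  rw [h0, MultilinearMap.map_add_univ]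
  refine Finset.sum_congr rfl fun S _ => ?_
  have h1 : S.piecewise (fun i => x • M i) (fun i => (1 : Matrix (Fin n) (Fin n) R) i)
      = S.piecewise (fun i => x • (S.piecewise M (1 : Matrix (Fin n) (Fin n) R)) i)
          (S.piecewise M (1 : Matrix (Fin n) (Fin n) R)) := by
    ext i j
    by_cases hi : i ∈ S
    · simp [Finset.piecewise_eq_of_mem _ _ _ hi, Finset.piecewise, hi]
    · simp [Finset.piecewise_eq_of_notMem _ _ _ hi, Finset.piecewise, hi]
  rw [h1, MultilinearMap.map_piecewise_smul]
  have h2 : (Matrix.detRowAlternating : (Fin n → R) [⋀^Fin n]→ₗ[R] R).toMultilinearMap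
      (S.piecewise M (1 : Matrix (Fin n) (Fin n) R))
      = Matrix.det (S.piecewise M (1 : Matrix (Fin n) (Fin n) R)) := rfl
  rw [h2, det_piecewise_one, Finset.prod_const, smul_eq_mul]
open Polynomial in

lemma sum_f_det_eq_sum_f_eigen {n : ℕ} (L : Matrix (Fin n) (Fin n) ℝ)
    (hL : L.IsHermitian) (f : ℕ → ℝ) :
    ∑ S : Finset (Fin n),
        f S.card * (L.submatrix (Subtype.val : {i // i ∈ S} → Fin n) Subtype.val).det
      = ∑ S : Finset (Fin n), f S.card * ∏ i ∈ S, hL.eigenvalues i := by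
  classical
  set lam := hL.eigenvalues with hlam
  set V : Matrix (Fin n) (Fin n) ℝ := (Matrix.IsHermitian.eigenvectorUnitary hL :
    Matrix (Fin n) (Fin n) ℝ) with hV
  have hV1 : V * star V = 1 :=
    Matrix.mem_unitaryGroup_iff.mp (Matrix.IsHermitian.eigenvectorUnitary hL).2
  have hV2 : star V * V = 1 :=
    Matrix.mem_unitaryGroup_iff'.mp (Matrix.IsHermitian.eigenvectorUnitary hL).2
  have hspec : L = V * Matrix.diagonal lam * star V := by
    have h := hL.spectral_theorem
    rwa [RCLike.ofReal_real_eq_id, Function.id_comp] at h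
  -- polynomial identity
  have e1 : ∀ M : Matrix (Fin n) (Fin n) ℝ, (1 + (X : ℝ[X]) • M.map C).det
      = ∑ S : Finset (Fin n),
          C (M.submatrix (Subtype.val : {i // i ∈ S} → Fin n) Subtype.val).det * X ^ S.card := by
    intro M
    rw [det_one_add_smul_eq_sum]
    refine Finset.sum_congr rfl fun S _ => ?_
    rw [Matrix.submatrix_map, ← RingHom.mapMatrix_apply, ← RingHom.map_det, mul_comm]
  have econj : (1 + (X : ℝ[X]) • L.map C)
      = V.map C * (1 + (X : ℝ[X]) • (Matrix.diagonal lam).map C) * (star V).map C := by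
    rw [mul_add, add_mul, mul_one, ← Matrix.map_mul, hV1, Matrix.map_one C (map_zero C) (map_one C)]
    congr 1
    rw [mul_smul_comm, smul_mul_assoc, ← Matrix.map_mul, ← Matrix.map_mul]
    rw [hspec]
  have edet : (1 + (X : ℝ[X]) • L.map C).det
      = (1 + (X : ℝ[X]) • (Matrix.diagonal lam).map C).det := by
    rw [econj, Matrix.det_mul, Matrix.det_mul]
    rw [mul_comm ((V.map C).det), mul_assoc, ← Matrix.det_mul, ← Matrix.map_mul, hV1,
      Matrix.map_one C (map_zero C) (map_one C), Matrix.det_one, mul_one]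
  have ediag : ∀ S : Finset (Fin n),
      ((Matrix.diagonal lam).submatrix (Subtype.val : {i // i ∈ S} → Fin n) Subtype.val).det
        = ∏ i ∈ S, lam i := by
    intro S
    rw [Matrix.submatrix_diagonal _ _ Subtype.val_injective, Matrix.det_diagonal]
    exact Finset.prod_coe_sort S lam
  have key : ∑ S : Finset (Fin n),
        C (L.submatrix (Subtype.val : {i // i ∈ S} → Fin n) Subtype.val).det * X ^ S.card
      = ∑ S : Finset (Fin n), C (∏ i ∈ S, lam i) * X ^ S.card := by
    rw [← e1 L, edet, e1]
    refine Finset.sum_congr rfl fun S _ => ?_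
    rw [ediag]
  -- coefficient extraction
  have hk : ∀ k : ℕ, (∑ S : Finset (Fin n),
        if k = S.card then (L.submatrix (Subtype.val : {i // i ∈ S} → Fin n) Subtype.val).det
        else 0)
      = ∑ S : Finset (Fin n), if k = S.card then ∏ i ∈ S, lam i else 0 := by
    intro k
    have h := congrArg (fun p => Polynomial.coeff p k) key
    simp only [Polynomial.finset_sum_coeff, Polynomial.coeff_C_mul_X_pow] at h
    exact h
  have expand : ∀ c : Finset (Fin n) → ℝ,
      ∑ S : Finset (Fin n), f S.card * c S
        = ∑ k ∈ Finset.range (n + 1), f k * ∑ S : Finset (Fin n), if k = S.card then c S else 0 := by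
    intro c
    have : ∀ k ∈ Finset.range (n + 1),
        f k * ∑ S : Finset (Fin n), (if k = S.card then c S else 0)
          = ∑ S : Finset (Fin n), (if k = S.card then f k * c S else 0) := by
      intro k _
      rw [Finset.mul_sum]
      exact Finset.sum_congr rfl fun S _ => by split <;> simp
    rw [Finset.sum_congr rfl this, Finset.sum_comm]
    refine Finset.sum_congr rfl fun S _ => ?_
    have hcard : S.card ∈ Finset.range (n + 1) := by
      simp [Finset.mem_range, Nat.lt_succ_iff]
      simpa using Finset.card_le_univ S
    rw [Finset.sum_ite_eq' (Finset.range (n + 1)) S.card (fun k => f k * c S), if_pos hcard]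
  rw [expand, expand]
  refine Finset.sum_congr rfl fun k _ => ?_
  rw [hk k]

lemma sum_powerset_prod {ι : Type*} [DecidableEq ι] (lam : ι → ℝ) (s : Finset ι) :
    ∑ S ∈ s.powerset, ∏ i ∈ S, lam i = ∏ i ∈ s, (lam i + 1) := by
  rw [Finset.prod_add]
  simp

lemma sum_powerset_card_prod {ι : Type*} [DecidableEq ι] (lam : ι → ℝ)
    (h : ∀ i, lam i + 1 ≠ 0) (s : Finset ι) :
    ∑ S ∈ s.powerset, (S.card : ℝ) * ∏ i ∈ S, lam i
      = (∑ i ∈ s, lam i / (lam i + 1)) * ∏ i ∈ s, (lam i + 1) := by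
  classical
  induction s using Finset.induction_on with
  | empty => simp
  | @insert a s ha ih =>
    have hins : ∀ t ∈ s.powerset, ((insert a t).card : ℝ) * ∏ i ∈ insert a t, lam i
        = lam a * ((t.card : ℝ) * ∏ i ∈ t, lam i) + lam a * ∏ i ∈ t, lam i := by
      intro t ht
      have hat : a ∉ t := fun hat => ha (Finset.mem_powerset.mp ht hat)
      rw [Finset.card_insert_of_notMem hat, Finset.prod_insert hat]
      push_cast
      ring
    rw [Finset.sum_powerset_insert ha, Finset.sum_congr rfl hins, Finset.sum_add_distrib,
      ← Finset.mul_sum, ← Finset.mul_sum, ih, sum_powerset_prod,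
      Finset.sum_insert ha, Finset.prod_insert ha]
    have ha1 := h a
    field_simp
    ring

lemma sum_powerset_card_sq_prod {ι : Type*} [DecidableEq ι] (lam : ι → ℝ)
    (h : ∀ i, lam i + 1 ≠ 0) (s : Finset ι) :
    ∑ S ∈ s.powerset, (S.card : ℝ) ^ 2 * ∏ i ∈ S, lam i
      = ((∑ i ∈ s, lam i / (lam i + 1)) ^ 2 + ∑ i ∈ s, lam i / (lam i + 1) ^ 2)
          * ∏ i ∈ s, (lam i + 1) := by
  classical
  induction s using Finset.induction_on with
  | empty => simp
  | @insert a s ha ih =>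
    have hins : ∀ t ∈ s.powerset, ((insert a t).card : ℝ) ^ 2 * ∏ i ∈ insert a t, lam i
        = lam a * ((t.card : ℝ) ^ 2 * ∏ i ∈ t, lam i)
          + 2 * lam a * ((t.card : ℝ) * ∏ i ∈ t, lam i) + lam a * ∏ i ∈ t, lam i := by
      intro t ht
      have hat : a ∉ t := fun hat => ha (Finset.mem_powerset.mp ht hat)
      rw [Finset.card_insert_of_notMem hat, Finset.prod_insert hat]
      push_cast
      ring
    rw [Finset.sum_powerset_insert ha, Finset.sum_congr rfl hins]
    rw [Finset.sum_add_distrib, Finset.sum_add_distrib, ← Finset.mul_sum, ← Finset.mul_sum,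
      ← Finset.mul_sum, ih, sum_powerset_prod, sum_powerset_card_prod lam h,
      Finset.sum_insert ha, Finset.sum_insert ha, Finset.prod_insert ha]
    have ha1 := h a
    field_simp
    ring

lemma specFacts {n : ℕ} (L : Matrix (Fin n) (Fin n) ℝ) (hL : L.PosSemidef) :
    (L + 1).det = ∏ i, (hL.1.eigenvalues i + 1) ∧
    (L * (L + 1)⁻¹).trace = ∑ i, hL.1.eigenvalues i / (hL.1.eigenvalues i + 1) := by
  classical
  set lam := hL.1.eigenvalues with hlam
  have hpos : ∀ i, lam i + 1 ≠ 0 := fun i => by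
    have := hL.eigenvalues_nonneg i
    positivity
  set V : Matrix (Fin n) (Fin n) ℝ := (Matrix.IsHermitian.eigenvectorUnitary hL.1 :
    Matrix (Fin n) (Fin n) ℝ) with hV
  have hV1 : V * star V = 1 :=
    Matrix.mem_unitaryGroup_iff.mp (Matrix.IsHermitian.eigenvectorUnitary hL.1).2
  have hV2 : star V * V = 1 :=
    Matrix.mem_unitaryGroup_iff'.mp (Matrix.IsHermitian.eigenvectorUnitary hL.1).2
  have hspec : L = V * Matrix.diagonal lam * star V := by
    have h := hL.1.spectral_theorem
    rwa [RCLike.ofReal_real_eq_id, Function.id_comp] at h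
  have hL1 : L + 1 = V * Matrix.diagonal (fun i => lam i + 1) * star V := by
    have hd : Matrix.diagonal (fun i => lam i + 1)
        = Matrix.diagonal lam + 1 := by
      rw [← Matrix.diagonal_one, Matrix.diagonal_add]
    rw [hd, mul_add, add_mul, mul_one, hV1, ← hspec]
  have hdet : (L + 1).det = ∏ i, (lam i + 1) := by
    rw [hL1, Matrix.det_mul, Matrix.det_mul, mul_comm (V.det), mul_assoc, ← Matrix.det_mul,
      hV1, Matrix.det_one, mul_one, Matrix.det_diagonal]
  have hconj : ∀ A B : Matrix (Fin n) (Fin n) ℝ,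
      (V * A * star V) * (V * B * star V) = V * (A * B) * star V := by
    intro A B
    calc (V * A * star V) * (V * B * star V)
        = V * A * (star V * V) * B * star V := by simp only [Matrix.mul_assoc]
      _ = V * (A * B) * star V := by
          rw [hV2]
          simp only [Matrix.mul_assoc, Matrix.one_mul]
  have hdd : Matrix.diagonal (fun i => lam i + 1) * Matrix.diagonal (fun i => (lam i + 1)⁻¹)
      = 1 := by
    rw [Matrix.diagonal_mul_diagonal]
    have : (fun i => (lam i + 1) * (lam i + 1)⁻¹) = fun _ => (1:ℝ) := by
      funext i; exact mul_inv_cancel₀ (hpos i)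
    rw [this, Matrix.diagonal_one]
  have hinv : (L + 1)⁻¹ = V * Matrix.diagonal (fun i => (lam i + 1)⁻¹) * star V := by
    refine Matrix.inv_eq_right_inv ?_
    rw [hL1, hconj, hdd, Matrix.mul_one, hV1]
  have htr : (L * (L + 1)⁻¹).trace = ∑ i, lam i / (lam i + 1) := by
    rw [hinv, hspec, hconj, Matrix.diagonal_mul_diagonal, Matrix.trace_mul_cycle, hV2, Matrix.one_mul, Matrix.trace_diagonal]
    simp [div_eq_mul_inv]
  exact ⟨hdet, htr⟩

theorem variance_cardinality {n : ℕ} (L : Matrix (Fin n) (Fin n) ℝ)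
    (hL : L.PosSemidef) :
    (∑ Y : Finset (Fin n), (Y.card : ℝ) ^ 2 * (principalSubmatrix L Y).det / (L + 1).det)
        - (L * (L + 1)⁻¹).trace ^ 2
      = ∑ i, hL.1.eigenvalues i / (hL.1.eigenvalues i + 1) ^ 2 := by
  classical
  obtain ⟨hdet, htr⟩ := specFacts L hL
  set lam := hL.1.eigenvalues with hlam
  have hpos : ∀ i, lam i + 1 ≠ 0 := fun i => by
    have := hL.eigenvalues_nonneg i
    positivity
  have hPne : (∏ i, (lam i + 1)) ≠ 0 := Finset.prod_ne_zero_iff.mpr fun i _ => hpos i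
  have hsum : ∑ Y : Finset (Fin n), (Y.card : ℝ) ^ 2 * (principalSubmatrix L Y).det
      = ((∑ i, lam i / (lam i + 1)) ^ 2 + ∑ i, lam i / (lam i + 1) ^ 2)
          * ∏ i, (lam i + 1) := by
    have h1 : ∑ Y : Finset (Fin n), (Y.card : ℝ) ^ 2 * (principalSubmatrix L Y).det
        = ∑ Y : Finset (Fin n), (Y.card : ℝ) ^ 2 * ∏ i ∈ Y, lam i :=
      sum_f_det_eq_sum_f_eigen L hL.1 (fun k => (k : ℝ) ^ 2)
    rw [h1, ← Finset.powerset_univ,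
      sum_powerset_card_sq_prod lam hpos Finset.univ]
  calc (∑ Y : Finset (Fin n), (Y.card : ℝ) ^ 2 * (principalSubmatrix L Y).det / (L + 1).det)
        - (L * (L + 1)⁻¹).trace ^ 2
      = (∑ Y : Finset (Fin n), (Y.card : ℝ) ^ 2 * (principalSubmatrix L Y).det) / (L + 1).det
        - (L * (L + 1)⁻¹).trace ^ 2 := by rw [Finset.sum_div]
    _ = ((∑ i, lam i / (lam i + 1)) ^ 2 + ∑ i, lam i / (lam i + 1) ^ 2)
        - (∑ i, lam i / (lam i + 1)) ^ 2 := by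
          rw [hsum, hdet, htr, mul_div_cancel_right₀ _ hPne]
    _ = ∑ i, lam i / (lam i + 1) ^ 2 := by ring
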